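/- Let A ∈ ℂ^{n×n}. The Fréchet derivative of the matrix exponential at A in direction E, i.e., the derivative of ε ↦ e^{A+εE} at ε = 0, equals ∫₀¹ e^{A(1−s)} E e^{As} ds. -/

import Mathlib

open Matrix MeasureTheory Filter

attribute [local instance] Matrix.frobeniusNormedAddCommGroup Matrix.frobeniusNormedSpace
  Matrix.frobeniusNormedRing Matrix.frobeniusNormedAlgebra

open NormedSpace in
lemma stmt13_key {n : ℕ} (A B : Matrix (Fin n) (Fin n) ℂ) :
    exp B - exp A
      = ∫ s in (0:ℝ)..1, exp ((1 - s) • A) * (B - A) * exp (s • B) := by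
  have hre : (exp : Matrix (Fin n) (Fin n) ℂ → _) = exp := rfl
  rw [← hre]
  have hderiv : ∀ s : ℝ, HasDerivAt (fun s : ℝ => exp ((1 - s) • A) * exp (s • B))
      (exp ((1 - s) • A) * (B - A) * exp (s • B)) s := by
    intro s
    have h1 : HasDerivAt (fun s : ℝ => exp ((1 - s) • A))
        (-(A * exp ((1 - s) • A))) s := by
      have := (hasDerivAt_exp_smul_const' (𝕂 := ℝ) A (1 - s)).scomp s
        (((hasDerivAt_id s).const_sub 1))
      simp at this; exact this
    have h2 : HasDerivAt (fun s : ℝ => exp (s • B)) (B * exp (s • B)) s :=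
      hasDerivAt_exp_smul_const' (𝕂 := ℝ) B s
    have h := h1.mul h2
    refine h.congr_deriv ?_
    have hc : A * exp ((1 - s) • A) = exp ((1 - s) • A) * A :=
      (((Commute.refl A).smul_right ((1:ℝ) - s)).exp_right).eq
    rw [hc]
    noncomm_ring
  have hcont : Continuous fun s : ℝ =>
      exp ((1 - s) • A) * (B - A) * exp (s • B) := by
    have h1 : Continuous fun s : ℝ => exp ((1 - s) • A) :=
      exp_continuous.comp (by fun_prop)
    have h2 : Continuous fun s : ℝ => exp (s • B) :=
      exp_continuous.comp (by fun_prop)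
    exact (h1.mul continuous_const).mul h2
  have := intervalIntegral.integral_eq_sub_of_hasDerivAt
    (f := fun s : ℝ => exp ((1 - s) • A) * exp (s • B))
    (fun s _ => hderiv s) (hcont.intervalIntegrable 0 1)
  rw [this]
  simp [exp_zero]

open NormedSpace in
/-- the derivative of `ε ↦ e^{A + εE}` at `ε = 0` equals
`∫₀¹ e^{A(1−s)} E e^{As} ds`. -/
theorem stmt13 {n : ℕ} (A E : Matrix (Fin n) (Fin n) ℂ) :
    HasDerivAt (fun ε : ℂ => NormedSpace.exp (A + ε • E))
      (∫ s in (0:ℝ)..1, NormedSpace.exp ((1 - s) • A) * E * NormedSpace.exp (s • A))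
      0 := by
  set g : ℂ → Matrix (Fin n) (Fin n) ℂ := fun ε =>
    ∫ s in (0:ℝ)..1, exp ((1 - s) • A) * E * exp (s • (A + ε • E)) with hg_def
  have hre : (exp : Matrix (Fin n) (Fin n) ℂ → _) = exp := rfl
  have hgcont : Continuous g := by
    apply intervalIntegral.continuous_parametric_intervalIntegral_of_continuous'
      (f := fun (ε : ℂ) (s : ℝ) => exp ((1 - s) • A) * E * exp (s • (A + ε • E)))
    rw [← hre, Function.uncurry_def]
    have h1 : Continuous fun p : ℂ × ℝ => exp ((1 - p.2) • A) :=
      exp_continuous.comp ((continuous_const.sub continuous_snd).smul continuous_const)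
    have h2 : Continuous fun p : ℂ × ℝ => exp (p.2 • (A + p.1 • E)) :=
      exp_continuous.comp (continuous_snd.smul
        (continuous_const.add (continuous_fst.smul continuous_const)))
    exact (h1.mul continuous_const).mul h2
  have heq : ∀ ε : ℂ, exp (A + ε • E) - exp A = ε • g ε := by
    intro ε
    rw [stmt13_key A (A + ε • E), hg_def]
    rw [← intervalIntegral.integral_smul]
    apply intervalIntegral.integral_congr
    intro s _
    simp only [add_sub_cancel_left]
    rw [mul_smul_comm, smul_mul_assoc]
  have hgoal : g 0 = ∫ s in (0:ℝ)..1, exp ((1 - s) • A) * E * exp (s • A) := by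
    simp [hg_def]
  rw [← hgoal]
  refine hasDerivAt_iff_tendsto_slope.mpr ?_
  have : Tendsto g (nhdsWithin 0 {(0:ℂ)}ᶜ) (nhds (g 0)) :=
    (hgcont.tendsto 0).mono_left nhdsWithin_le_nhds
  refine this.congr' ?_
  filter_upwards [self_mem_nhdsWithin] with ε (hε : ε ≠ 0)
  rw [slope_def_module]
  rw [sub_zero, zero_smul, add_zero, heq ε, smul_smul, inv_mul_cancel₀ hε, one_smul]
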